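/- Let k be an even natural number and G a finite connected simple graph. Let G(k) be the graph obtained from G by subdividing every edge with k new vertices, i.e. G(k) has vertex set V(G) together with k new vertices (e,1),…,(e,k) for each edge e of G, and each edge e = uv of G is replaced by the path u,(e,1),(e,2),…,(e,k),v. Then G(k) is geodetic if and only if G is geodetic. -/

import Mathlib

open SimpleGraph

/-- A graph is *geodetic* if it is connected and between any two vertices
there is exactly one shortest path (geodesic). -/
def IsGeodetic {V : Type*} (G : SimpleGraph V) : Prop :=
  G.Connected ∧ ∀ u v : V, ∃! p : G.Walk u v, p.IsPath ∧ p.length = G.dist u v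

/-- The smaller endpoint of an edge (with respect to a linear order on the vertices). -/
def edgeMin {V : Type*} [LinearOrder V] (e : Sym2 V) : V :=
  Sym2.lift ⟨fun a b => min a b, fun _ _ => min_comm _ _⟩ e

/-- The larger endpoint of an edge (with respect to a linear order on the vertices). -/
def edgeMax {V : Type*} [LinearOrder V] (e : Sym2 V) : V :=
  Sym2.lift ⟨fun a b => max a b, fun _ _ => max_comm _ _⟩ e

/-- The graph `G(k)` obtained from `G` by subdividing every edge with `k` new vertices:
its vertices are the vertices of `G` together with `k` new vertices `(e, 0), …, (e, k-1)`
for every edge `e` of `G`, and every edge `e = uv` of `G` (with `u < v`) is replaced by the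
path `u, (e, 0), (e, 1), …, (e, k-1), v`.  (For `k = 0` this is `G` itself.) -/
def subdivision {V : Type*} [LinearOrder V] (G : SimpleGraph V) (k : ℕ) :
    SimpleGraph (V ⊕ (G.edgeSet × Fin k)) :=
  SimpleGraph.fromRel (fun x y =>
    match x, y with
    | Sum.inl u, Sum.inl v => k = 0 ∧ G.Adj u v
    | Sum.inl u, Sum.inr (e, i) =>
        (i.val = 0 ∧ u = edgeMin e.val) ∨ (i.val = k - 1 ∧ u = edgeMax e.val)
    | Sum.inr _, Sum.inl _ => False
    | Sum.inr (e, i), Sum.inr (e', j) => e = e' ∧ i.val + 1 = j.val)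

section UD
variable {V : Type*} {G : SimpleGraph V}

/-- unique-descent property -/
def UDesc (G : SimpleGraph V) : Prop :=
  ∀ u v w1 w2 : V, G.Adj u w1 → G.Adj u w2 → G.dist w1 v + 1 = G.dist u v →
    G.dist w2 v + 1 = G.dist u v → w1 = w2

lemma descent_exists (hconn : G.Connected) {u v : V} (h : G.dist u v ≠ 0) :
    ∃ w, G.Adj u w ∧ G.dist w v + 1 = G.dist u v := by
  obtain ⟨p, hp⟩ := exists_walk_of_dist_ne_zero h
  cases p with
  | nil => exact absurd SimpleGraph.dist_self h
  | @cons _ w _ hadj q =>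
    refine ⟨w, hadj, ?_⟩
    have h1 : G.dist w v ≤ q.length := dist_le q
    have h2 : G.dist u v ≤ G.dist u w + G.dist w v := hconn.dist_triangle
    have h3 : G.dist u w = 1 := dist_eq_one_iff_adj.mpr hadj
    simp only [Walk.length_cons] at hp
    omega

lemma ud_path_unique (hconn : G.Connected) (hud : UDesc G) {v : V} :
    ∀ (n : ℕ) {u : V} (p q : G.Walk u v), p.IsPath → q.IsPath →
      p.length = n → q.length = n → G.dist u v = n → p = q := by
  intro n
  induction n with
  | zero =>
    intro u p q _ _ hp hq _
    have := Walk.eq_of_length_eq_zero hp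
    subst this
    rw [Walk.length_eq_zero_iff] at hp hq
    rw [Walk.nil_iff_eq_nil.mp hp, Walk.nil_iff_eq_nil.mp hq]
  | succ n ih =>
    intro u p q hpp hqp hp hq hd
    cases p with
    | nil => simp at hp
    | @cons _ w1 _ h1 p' =>
      cases q with
      | nil => simp at hq
      | @cons _ w2 _ h2 q' =>
        simp only [Walk.length_cons] at hp hq
        have hd1 : G.dist w1 v = n := by
          have := dist_le p'
          have h2' : G.dist u v ≤ G.dist u w1 + G.dist w1 v := hconn.dist_triangle
          have h3 : G.dist u w1 = 1 := dist_eq_one_iff_adj.mpr h1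
          omega
        have hd2 : G.dist w2 v = n := by
          have := dist_le q'
          have h2' : G.dist u v ≤ G.dist u w2 + G.dist w2 v := hconn.dist_triangle
          have h3 : G.dist u w2 = 1 := dist_eq_one_iff_adj.mpr h2
          omega
        have hw : w1 = w2 := hud u v w1 w2 h1 h2 (by omega) (by omega)
        subst hw
        have : p' = q' := ih p' q' (Walk.cons_isPath_iff _ _ |>.mp hpp).1
          (Walk.cons_isPath_iff _ _ |>.mp hqp).1 (by omega) (by omega) hd1
        rw [this]

lemma isGeodetic_iff_udesc (hconn : G.Connected) : IsGeodetic G ↔ UDesc G := by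
  constructor
  · classical
    rintro ⟨-, hg⟩ u v w1 w2 h1 h2 hd1 hd2
    obtain ⟨p, -, hu⟩ := hg u v
    obtain ⟨r1, hr1p, hr1l⟩ := hconn.exists_path_of_dist w1 v
    obtain ⟨r2, hr2p, hr2l⟩ := hconn.exists_path_of_dist w2 v
    have hnot1 : u ∉ r1.support := by
      intro hmem
      have := Walk.length_dropUntil_le r1 hmem
      have := dist_le (r1.dropUntil u hmem)
      omega
    have hnot2 : u ∉ r2.support := by
      intro hmem
      have := Walk.length_dropUntil_le r2 hmem
      have := dist_le (r2.dropUntil u hmem)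
      omega
    have hP1 : ((Walk.cons h1 r1).IsPath ∧ (Walk.cons h1 r1).length = G.dist u v) :=
      ⟨(Walk.cons_isPath_iff _ _).mpr ⟨hr1p, hnot1⟩, by simp [hr1l, hd1]⟩
    have hP2 : ((Walk.cons h2 r2).IsPath ∧ (Walk.cons h2 r2).length = G.dist u v) :=
      ⟨(Walk.cons_isPath_iff _ _).mpr ⟨hr2p, hnot2⟩, by simp [hr2l, hd2]⟩
    have heq : Walk.cons h1 r1 = Walk.cons h2 r2 := by
      rw [hu _ hP1, hu _ hP2]
    have := congrArg (fun (w : G.Walk u v) => w.getVert 1) heq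
    simpa [Walk.getVert_cons_succ, Walk.getVert_zero] using this
  · intro hud
    refine ⟨hconn, fun u v => ?_⟩
    obtain ⟨p, hpp, hpl⟩ := hconn.exists_path_of_dist u v
    exact ⟨p, ⟨hpp, hpl⟩, fun q ⟨hqp, hql⟩ =>
      ud_path_unique hconn hud (G.dist u v) q p hqp hpp hql hpl rfl⟩

end UD


section Sub
variable {V : Type*} [LinearOrder V] {G : SimpleGraph V} {k : ℕ}

@[simp] lemma edgeMin_mk (x y : V) : edgeMin s(x,y) = min x y := rfl
@[simp] lemma edgeMax_mk (x y : V) : edgeMax s(x,y) = max x y := rfl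

/-- endpoints -/
noncomputable def eA (e : G.edgeSet) : V := edgeMin e.val
noncomputable def eB (e : G.edgeSet) : V := edgeMax e.val

lemma adj_eAB (e : G.edgeSet) : G.Adj (eA e) (eB e) := by
  obtain ⟨e, he⟩ := e
  induction e with
  | _ x y =>
    simp only [eA, eB, edgeMin_mk, edgeMax_mk]
    rw [SimpleGraph.mem_edgeSet] at he
    rcases le_total x y with h | h
    · rwa [min_eq_left h, max_eq_right h]
    · rw [min_eq_right h, max_eq_left h]; exact he.symm

lemma eA_lt_eB (e : G.edgeSet) : eA e < eB e := by
  have h := (adj_eAB e).ne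
  obtain ⟨e, he⟩ := e
  induction e with
  | _ x y =>
    simp only [eA, eB, edgeMin_mk, edgeMax_mk] at h ⊢
    exact lt_of_le_of_ne min_le_max h

lemma eA_ne_eB (e : G.edgeSet) : eA e ≠ eB e := (eA_lt_eB e).ne

lemma mk_eAB (e : G.edgeSet) : s(eA e, eB e) = e.val := by
  obtain ⟨e, he⟩ := e
  induction e with
  | _ x y =>
    simp only [eA, eB, edgeMin_mk, edgeMax_mk]
    rcases le_total x y with h | h
    · rw [min_eq_left h, max_eq_right h]
    · rw [min_eq_right h, max_eq_left h, Sym2.eq_swap]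

lemma eA_mk {u w : V} (h : u < w) (hadj : G.Adj u w) : eA (⟨s(u,w), hadj⟩ : G.edgeSet) = u := by
  simp [eA, min_eq_left h.le]

lemma eB_mk {u w : V} (h : u < w) (hadj : G.Adj u w) : eB (⟨s(u,w), hadj⟩ : G.edgeSet) = w := by
  simp [eB, max_eq_right h.le]

lemma adj_inl_inl {u v : V} :
    (subdivision G k).Adj (Sum.inl u) (Sum.inl v) ↔ k = 0 ∧ G.Adj u v := by
  rw [subdivision, SimpleGraph.fromRel_adj]
  constructor
  · rintro ⟨-, h | h⟩
    · exact ⟨h.1, h.2⟩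
    · exact ⟨h.1, h.2.symm⟩
  · rintro ⟨hk, h⟩
    exact ⟨by simp [h.ne], Or.inl ⟨hk, h⟩⟩

lemma adj_inl_inr {u : V} {e : G.edgeSet} {i : Fin k} :
    (subdivision G k).Adj (Sum.inl u) (Sum.inr (e, i)) ↔
      (i.val = 0 ∧ u = eA e) ∨ (i.val = k - 1 ∧ u = eB e) := by
  rw [subdivision, SimpleGraph.fromRel_adj]
  constructor
  · rintro ⟨-, h | h⟩
    · exact h
    · exact h.elim
  · intro h
    exact ⟨by simp, Or.inl h⟩

lemma adj_inr_inl {u : V} {e : G.edgeSet} {i : Fin k} :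
    (subdivision G k).Adj (Sum.inr (e, i)) (Sum.inl u) ↔
      (i.val = 0 ∧ u = eA e) ∨ (i.val = k - 1 ∧ u = eB e) := by
  rw [SimpleGraph.adj_comm]; exact adj_inl_inr

lemma adj_inr_inr {e f : G.edgeSet} {i j : Fin k} :
    (subdivision G k).Adj (Sum.inr (e, i)) (Sum.inr (f, j)) ↔
      e = f ∧ (i.val + 1 = j.val ∨ j.val + 1 = i.val) := by
  rw [subdivision, SimpleGraph.fromRel_adj]
  constructor
  · rintro ⟨-, h | h⟩
    · exact ⟨h.1, Or.inl h.2⟩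
    · exact ⟨h.1.symm, Or.inr h.2⟩
  · rintro ⟨rfl, h | h⟩
    · refine ⟨by simp [Prod.ext_iff]; omega, Or.inl ⟨rfl, h⟩⟩
    · refine ⟨by simp [Prod.ext_iff]; omega, Or.inr ⟨rfl, h⟩⟩

end Sub

section Dist
variable {V : Type*} [LinearOrder V] {G : SimpleGraph V} {k : ℕ}

/-- scaled distance from original vertex `u` to a subdivision vertex `y` -/
noncomputable def bse (y : V ⊕ (G.edgeSet × Fin k)) (u : V) : ℕ :=
  match y with
  | Sum.inl v => (k+1) * G.dist u v
  | Sum.inr (f, j) =>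
      min ((k+1) * G.dist u (eA f) + (j.val+1)) ((k+1) * G.dist u (eB f) + (k - j.val))

open scoped Classical in
/-- the distance function on the subdivision -/
noncomputable def DD (x y : V ⊕ (G.edgeSet × Fin k)) : ℕ :=
  match x with
  | Sum.inl u => bse y u
  | Sum.inr (e, i) =>
      match y with
      | Sum.inl _ => min (bse y (eA e) + (i.val+1)) (bse y (eB e) + (k - i.val))
      | Sum.inr (f, j) =>
          if e = f then Nat.dist i.val j.val
          else min (bse y (eA e) + (i.val+1)) (bse y (eB e) + (k - i.val))

@[simp] lemma bse_inl (v u : V) :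
    (bse (Sum.inl v : V ⊕ (G.edgeSet × Fin k)) u) = (k+1) * G.dist u v := rfl

lemma bse_inr (f : G.edgeSet) (j : Fin k) (u : V) :
    bse (Sum.inr (f, j)) u =
      min ((k+1) * G.dist u (eA f) + (j.val+1)) ((k+1) * G.dist u (eB f) + (k - j.val)) := rfl

@[simp] lemma DD_inl (u : V) (y : V ⊕ (G.edgeSet × Fin k)) : DD (Sum.inl u) y = bse y u := rfl

lemma DD_inr_inl (e : G.edgeSet) (i : Fin k) (v : V) :
    DD (Sum.inr (e, i)) (Sum.inl v) =
      min (bse (Sum.inl v : V ⊕ (G.edgeSet × Fin k)) (eA e) + (i.val+1))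
        (bse (Sum.inl v : V ⊕ (G.edgeSet × Fin k)) (eB e) + (k - i.val)) := rfl

lemma DD_inr_inr_same (e : G.edgeSet) (i j : Fin k) :
    DD (Sum.inr (e, i)) (Sum.inr (e, j)) = Nat.dist i.val j.val := by
  simp [DD]

lemma DD_inr_inr_ne {e f : G.edgeSet} (h : e ≠ f) (i : Fin k) (j : Fin k) :
    DD (Sum.inr (e, i)) (Sum.inr (f, j)) =
      min (bse (Sum.inr (f,j)) (eA e) + (i.val+1)) (bse (Sum.inr (f,j)) (eB e) + (k - i.val)) := by
  simp [DD, h]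

lemma DD_self (y : V ⊕ (G.edgeSet × Fin k)) : DD y y = 0 := by
  cases y with
  | inl v => simp
  | inr p =>
    obtain ⟨e, i⟩ := p
    rw [DD_inr_inr_same, Nat.dist_self]

omit [LinearOrder V] in
lemma dist_adj_le (hconn : G.Connected) {u w : V} (h : G.Adj u w) (t : V) :
    G.dist u t ≤ G.dist w t + 1 := by
  have h1 := hconn.dist_triangle (u := u) (v := w) (w := t)
  have h2 : G.dist u w = 1 := dist_eq_one_iff_adj.mpr h
  omega

lemma bse_lip (hconn : G.Connected) (y : V ⊕ (G.edgeSet × Fin k)) {u w : V} (h : G.Adj u w) :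
    bse y u ≤ bse y w + (k+1) := by
  cases y with
  | inl v =>
    have h1 := dist_adj_le hconn h v
    have h2 : (k+1) * G.dist u v ≤ (k+1) * (G.dist w v + 1) := Nat.mul_le_mul_left _ h1
    rw [Nat.mul_add, Nat.mul_one] at h2
    simpa using h2
  | inr p =>
    obtain ⟨f, j⟩ := p
    have h1 := dist_adj_le hconn h (eA f)
    have h2 := dist_adj_le hconn h (eB f)
    have h3 : (k+1) * G.dist u (eA f) ≤ (k+1) * (G.dist w (eA f) + 1) := Nat.mul_le_mul_left _ h1
    have h4 : (k+1) * G.dist u (eB f) ≤ (k+1) * (G.dist w (eB f) + 1) := Nat.mul_le_mul_left _ h2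
    rw [Nat.mul_add, Nat.mul_one] at h3 h4
    rw [bse_inr, bse_inr]
    omega

lemma bse_eA (f : G.edgeSet) (j : Fin k) : bse (Sum.inr (f, j)) (eA f) = j.val + 1 := by
  have hj := j.isLt
  have h1 : G.dist (eA f) (eA f) = 0 := by simp
  have h2 : G.dist (eA f) (eB f) = 1 := dist_eq_one_iff_adj.mpr (adj_eAB f)
  rw [bse_inr, h1, h2]
  omega

lemma bse_eB (f : G.edgeSet) (j : Fin k) : bse (Sum.inr (f, j)) (eB f) = k - j.val := by
  have hj := j.isLt
  have h1 : G.dist (eB f) (eB f) = 0 := by simp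
  have h2 : G.dist (eB f) (eA f) = 1 := dist_eq_one_iff_adj.mpr (adj_eAB f).symm
  rw [bse_inr, h1, h2]
  omega

lemma DD_lip (hconn : G.Connected) {x x' : V ⊕ (G.edgeSet × Fin k)}
    (y : V ⊕ (G.edgeSet × Fin k)) (h : (subdivision G k).Adj x x') :
    DD x y ≤ DD x' y + 1 := by
  cases x with
  | inl u =>
    cases x' with
    | inl v =>
      rw [adj_inl_inl] at h
      obtain ⟨hk0, hadj⟩ := h
      cases y with
      | inl w =>
        have h1 := dist_adj_le hconn hadj w
        subst hk0
        simpa using h1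
      | inr p => exact absurd p.2.isLt (by omega)
    | inr p =>
      obtain ⟨e, i⟩ := p
      rw [adj_inl_inr] at h
      have hAB : ∀ z, bse z (eA e) ≤ bse z (eB e) + (k+1) := fun z => bse_lip hconn z (adj_eAB e)
      have hBA : ∀ z, bse z (eB e) ≤ bse z (eA e) + (k+1) := fun z => bse_lip hconn z (adj_eAB e).symm
      have hik := i.isLt
      rcases h with ⟨hi, rfl⟩ | ⟨hi, rfl⟩
      · cases y with
        | inl v =>
          rw [DD_inl, DD_inr_inl]
          have := hAB (Sum.inl v); omega
        | inr q =>
          obtain ⟨f, j⟩ := q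
          by_cases hef : e = f
          · subst hef
            rw [DD_inl, DD_inr_inr_same, bse_eA]
            have hjk := j.isLt
            unfold Nat.dist; omega
          · rw [DD_inl, DD_inr_inr_ne hef]
            have := hAB (Sum.inr (f, j)); omega
      · cases y with
        | inl v =>
          rw [DD_inl, DD_inr_inl]
          have := hBA (Sum.inl v); omega
        | inr q =>
          obtain ⟨f, j⟩ := q
          by_cases hef : e = f
          · subst hef
            rw [DD_inl, DD_inr_inr_same, bse_eB]
            have hjk := j.isLt
            unfold Nat.dist; omega
          · rw [DD_inl, DD_inr_inr_ne hef]
            have := hBA (Sum.inr (f, j)); omega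
  | inr p =>
    obtain ⟨e, i⟩ := p
    have hik := i.isLt
    cases x' with
    | inl u =>
      rw [adj_inr_inl] at h
      rcases h with ⟨hi, rfl⟩ | ⟨hi, rfl⟩
      · cases y with
        | inl v => rw [DD_inl, DD_inr_inl]; omega
        | inr q =>
          obtain ⟨f, j⟩ := q
          by_cases hef : e = f
          · subst hef
            rw [DD_inl, DD_inr_inr_same, bse_eA]
            have hjk := j.isLt
            unfold Nat.dist; omega
          · rw [DD_inl, DD_inr_inr_ne hef]; omega
      · cases y with
        | inl v => rw [DD_inl, DD_inr_inl]; omega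
        | inr q =>
          obtain ⟨f, j⟩ := q
          by_cases hef : e = f
          · subst hef
            rw [DD_inl, DD_inr_inr_same, bse_eB]
            have hjk := j.isLt
            unfold Nat.dist; omega
          · rw [DD_inl, DD_inr_inr_ne hef]; omega
    | inr q =>
      obtain ⟨f, j⟩ := q
      rw [adj_inr_inr] at h
      obtain ⟨rfl, hij⟩ := h
      have hjk := j.isLt
      cases y with
      | inl v => rw [DD_inr_inl, DD_inr_inl]; omega
      | inr r =>
        obtain ⟨g, l⟩ := r
        by_cases heg : e = g
        · subst heg
          rw [DD_inr_inr_same, DD_inr_inr_same]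
          unfold Nat.dist; omega
        · rw [DD_inr_inr_ne heg, DD_inr_inr_ne heg]; omega

lemma DD_le_walk (hconn : G.Connected) {x y : V ⊕ (G.edgeSet × Fin k)}
    (p : (subdivision G k).Walk x y) : DD x y ≤ p.length := by
  induction p with
  | nil => simp [DD_self]
  | @cons _ _ w h q ih =>
    have h1 := DD_lip hconn w h
    simp only [SimpleGraph.Walk.length_cons]
    omega

end Dist
section Walks
variable {V : Type*} [LinearOrder V] {G : SimpleGraph V} {k : ℕ}

lemma exists_chain_walk (e : G.edgeSet) : ∀ (d i : ℕ) (h : i + d < k),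
    ∃ w : (subdivision G k).Walk (Sum.inr (e, ⟨i, by omega⟩)) (Sum.inr (e, ⟨i+d, h⟩)),
      w.length = d := by
  intro d
  induction d with
  | zero => intro i h; exact ⟨SimpleGraph.Walk.nil, rfl⟩
  | succ d ih =>
    intro i h
    obtain ⟨w, hw⟩ := ih (i+1) (by omega)
    have hadj : (subdivision G k).Adj (Sum.inr (e, ⟨i, by omega⟩)) (Sum.inr (e, ⟨i+1, by omega⟩)) :=
      adj_inr_inr.mpr ⟨rfl, Or.inl rfl⟩
    have he : (Sum.inr (e, (⟨i+1+d, by omega⟩ : Fin k)) : V ⊕ (G.edgeSet × Fin k)) =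
        Sum.inr (e, ⟨i+(d+1), h⟩) := by
      congr 1
      exact congrArg _ (Fin.ext (show i+1+d = i+(d+1) by omega))
    refine ⟨SimpleGraph.Walk.cons hadj (w.copy rfl he), ?_⟩
    rw [SimpleGraph.Walk.length_cons, SimpleGraph.Walk.length_copy, hw]

lemma exists_walk_inr (e : G.edgeSet) (i j : Fin k) :
    ∃ w : (subdivision G k).Walk (Sum.inr (e, i)) (Sum.inr (e, j)),
      w.length = Nat.dist i.val j.val := by
  have hik := i.isLt; have hjk := j.isLt
  rcases le_total i.val j.val with hle | hle
  · obtain ⟨w, hw⟩ := exists_chain_walk (k := k) e (j.val - i.val) i.val (by omega)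
    have h1 : (Sum.inr (e, (⟨i.val, by omega⟩ : Fin k)) : V ⊕ (G.edgeSet × Fin k)) =
        Sum.inr (e, i) := rfl
    have h2 : (Sum.inr (e, (⟨i.val + (j.val - i.val), by omega⟩ : Fin k)) :
        V ⊕ (G.edgeSet × Fin k)) = Sum.inr (e, j) := by
      congr 1; exact congrArg _ (Fin.ext (show i.val + (j.val - i.val) = j.val by omega))
    refine ⟨w.copy h1 h2, ?_⟩
    rw [SimpleGraph.Walk.length_copy, hw]
    unfold Nat.dist; omega
  · obtain ⟨w, hw⟩ := exists_chain_walk (k := k) e (i.val - j.val) j.val (by omega)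
    have h1 : (Sum.inr (e, (⟨j.val, by omega⟩ : Fin k)) : V ⊕ (G.edgeSet × Fin k)) =
        Sum.inr (e, j) := rfl
    have h2 : (Sum.inr (e, (⟨j.val + (i.val - j.val), by omega⟩ : Fin k)) :
        V ⊕ (G.edgeSet × Fin k)) = Sum.inr (e, i) := by
      congr 1; exact congrArg _ (Fin.ext (show j.val + (i.val - j.val) = i.val by omega))
    refine ⟨(w.copy h1 h2).reverse, ?_⟩
    rw [SimpleGraph.Walk.length_reverse, SimpleGraph.Walk.length_copy, hw]
    unfold Nat.dist; omega

lemma exists_walk_down (e : G.edgeSet) (j : Fin k) :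
    ∃ w : (subdivision G k).Walk (Sum.inl (eA e)) (Sum.inr (e, j)), w.length = j.val + 1 := by
  have hk : 0 < k := j.pos
  obtain ⟨w, hw⟩ := exists_walk_inr e ⟨0, hk⟩ j
  have hadj : (subdivision G k).Adj (Sum.inl (eA e)) (Sum.inr (e, ⟨0, hk⟩)) :=
    adj_inl_inr.mpr (Or.inl ⟨rfl, rfl⟩)
  refine ⟨SimpleGraph.Walk.cons hadj w, ?_⟩
  rw [SimpleGraph.Walk.length_cons, hw]
  show Nat.dist 0 j.val + 1 = j.val + 1
  unfold Nat.dist; omega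

lemma exists_walk_up (e : G.edgeSet) (j : Fin k) :
    ∃ w : (subdivision G k).Walk (Sum.inl (eB e)) (Sum.inr (e, j)), w.length = k - j.val := by
  have hk : 0 < k := j.pos
  have hjk := j.isLt
  obtain ⟨w, hw⟩ := exists_walk_inr e ⟨k-1, by omega⟩ j
  have hadj : (subdivision G k).Adj (Sum.inl (eB e)) (Sum.inr (e, ⟨k-1, by omega⟩)) :=
    adj_inl_inr.mpr (Or.inr ⟨rfl, rfl⟩)
  refine ⟨SimpleGraph.Walk.cons hadj w, ?_⟩
  rw [SimpleGraph.Walk.length_cons, hw]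
  show Nat.dist (k-1) j.val + 1 = k - j.val
  unfold Nat.dist; omega

lemma exists_walk_AB (e : G.edgeSet) :
    ∃ w : (subdivision G k).Walk (Sum.inl (eA e)) (Sum.inl (eB e)), w.length = k + 1 := by
  rcases Nat.eq_zero_or_pos k with hk | hk
  · subst hk
    exact ⟨SimpleGraph.Walk.cons (adj_inl_inl.mpr ⟨rfl, adj_eAB e⟩) SimpleGraph.Walk.nil, rfl⟩
  · obtain ⟨w, hw⟩ := exists_walk_down (k := k) e ⟨k-1, by omega⟩
    have hadj : (subdivision G k).Adj (Sum.inr (e, ⟨k-1, by omega⟩)) (Sum.inl (eB e)) :=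
      adj_inr_inl.mpr (Or.inr ⟨rfl, rfl⟩)
    refine ⟨w.append (SimpleGraph.Walk.cons hadj SimpleGraph.Walk.nil), ?_⟩
    rw [SimpleGraph.Walk.length_append, hw, SimpleGraph.Walk.length_cons,
      SimpleGraph.Walk.length_nil]
    show k - 1 + 1 + (0 + 1) = k + 1
    omega

lemma exists_walk_edge {u w : V} (hadj : G.Adj u w) :
    ∃ q : (subdivision G k).Walk (Sum.inl u) (Sum.inl w), q.length = k + 1 := by
  rcases hadj.ne.lt_or_gt with h | h
  · obtain ⟨q, hq⟩ := exists_walk_AB (G := G) (k := k) ⟨s(u,w), hadj⟩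
    exact ⟨q.copy (by rw [eA_mk h hadj]) (by rw [eB_mk h hadj]),
      by rw [SimpleGraph.Walk.length_copy]; exact hq⟩
  · obtain ⟨q, hq⟩ := exists_walk_AB (G := G) (k := k) ⟨s(w,u), hadj.symm⟩
    exact ⟨(q.copy (by rw [eA_mk h hadj.symm]) (by rw [eB_mk h hadj.symm])).reverse,
      by rw [SimpleGraph.Walk.length_reverse, SimpleGraph.Walk.length_copy]; exact hq⟩

lemma exists_walk_expand {u v : V} (p : G.Walk u v) :
    ∃ q : (subdivision G k).Walk (Sum.inl u) (Sum.inl v), q.length = (k+1) * p.length := by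
  induction p with
  | nil => exact ⟨SimpleGraph.Walk.nil, by simp⟩
  | cons h p' ih =>
    obtain ⟨q1, hq1⟩ := exists_walk_edge (k := k) h
    obtain ⟨q2, hq2⟩ := ih
    refine ⟨q1.append q2, ?_⟩
    rw [SimpleGraph.Walk.length_append, hq1, hq2, SimpleGraph.Walk.length_cons, Nat.mul_succ]
    omega

lemma exists_walk_bse (hconn : G.Connected) (y : V ⊕ (G.edgeSet × Fin k)) (u : V) :
    ∃ q : (subdivision G k).Walk (Sum.inl u) y, q.length = bse y u := by
  cases y with
  | inl v =>
    obtain ⟨p, hp⟩ := hconn.exists_walk_length_eq_dist u v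
    obtain ⟨q, hq⟩ := exists_walk_expand (k := k) p
    exact ⟨q, by rw [hq, hp, bse_inl]⟩
  | inr r =>
    obtain ⟨f, j⟩ := r
    rcases le_total ((k+1) * G.dist u (eA f) + (j.val+1)) ((k+1) * G.dist u (eB f) + (k - j.val))
      with hle | hle
    · obtain ⟨p, hp⟩ := hconn.exists_walk_length_eq_dist u (eA f)
      obtain ⟨q1, hq1⟩ := exists_walk_expand (k := k) p
      obtain ⟨q2, hq2⟩ := exists_walk_down f j
      refine ⟨q1.append q2, ?_⟩
      rw [SimpleGraph.Walk.length_append, hq1, hq2, hp, bse_inr, min_eq_left hle]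
    · obtain ⟨p, hp⟩ := hconn.exists_walk_length_eq_dist u (eB f)
      obtain ⟨q1, hq1⟩ := exists_walk_expand (k := k) p
      obtain ⟨q2, hq2⟩ := exists_walk_up f j
      refine ⟨q1.append q2, ?_⟩
      rw [SimpleGraph.Walk.length_append, hq1, hq2, hp, bse_inr, min_eq_right hle]

lemma exists_walk_DD (hconn : G.Connected) (x y : V ⊕ (G.edgeSet × Fin k)) :
    ∃ q : (subdivision G k).Walk x y, q.length = DD x y := by
  cases x with
  | inl u => exact exists_walk_bse hconn y u
  | inr r =>
    obtain ⟨e, i⟩ := r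
    have hside : ∀ hne : (∀ (j : Fin k), y ≠ Sum.inr (e, j)),
        DD (Sum.inr (e,i)) y = min (bse y (eA e) + (i.val+1)) (bse y (eB e) + (k - i.val)) := by
      intro hne
      cases y with
      | inl v => exact DD_inr_inl e i v
      | inr r' =>
        obtain ⟨f, j⟩ := r'
        have : e ≠ f := fun h => hne j (by rw [h])
        exact DD_inr_inr_ne this i j
    by_cases hy : ∃ j : Fin k, y = Sum.inr (e, j)
    · obtain ⟨j, rfl⟩ := hy
      obtain ⟨q, hq⟩ := exists_walk_inr e i j
      exact ⟨q, by rw [hq, DD_inr_inr_same]⟩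
    · push_neg at hy
      rw [hside hy]
      rcases le_total (bse y (eA e) + (i.val+1)) (bse y (eB e) + (k - i.val)) with hle | hle
      · obtain ⟨q1, hq1⟩ := exists_walk_down e i
        obtain ⟨q2, hq2⟩ := exists_walk_bse hconn y (eA e)
        refine ⟨q1.reverse.append q2, ?_⟩
        rw [SimpleGraph.Walk.length_append, SimpleGraph.Walk.length_reverse, hq1, hq2,
          min_eq_left hle]
        omega
      · obtain ⟨q1, hq1⟩ := exists_walk_up e i
        obtain ⟨q2, hq2⟩ := exists_walk_bse hconn y (eB e)
        refine ⟨q1.reverse.append q2, ?_⟩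
        rw [SimpleGraph.Walk.length_append, SimpleGraph.Walk.length_reverse, hq1, hq2,
          min_eq_right hle]
        omega

lemma subdivision_connected (hconn : G.Connected) : (subdivision G k).Connected := by
  rw [SimpleGraph.connected_iff]
  refine ⟨fun x y => ⟨(exists_walk_DD hconn x y).choose⟩, ⟨Sum.inl hconn.nonempty.some⟩⟩

lemma subdivision_dist (hconn : G.Connected) (x y : V ⊕ (G.edgeSet × Fin k)) :
    (subdivision G k).dist x y = DD x y := by
  refine le_antisymm ?_ ?_
  · obtain ⟨q, hq⟩ := exists_walk_DD hconn x y
    simpa [hq] using SimpleGraph.dist_le q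
  · obtain ⟨p, hp⟩ := (subdivision_connected hconn).exists_walk_length_eq_dist x y
    rw [← hp]
    exact DD_le_walk hconn p

end Walks
section Arith

lemma key_div {c x y r s : ℕ} (hc : 0 < c) (hr : r < c) (hs : s < c)
    (h : c*x + r = c*y + s) : x = y ∧ r = s := by
  have h1 : (c*x + r) / c = x := by
    rw [Nat.mul_add_div hc, Nat.div_eq_of_lt hr, Nat.add_zero]
  have h2 : (c*y + s) / c = y := by
    rw [Nat.mul_add_div hc, Nat.div_eq_of_lt hs, Nat.add_zero]
  have hxy : x = y := by rw [← h1, ← h2, h]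
  subst hxy
  exact ⟨rfl, by omega⟩

lemma key_div2 {c x y r s : ℕ} (hc : 0 < c) (hr : r < 2*c) (hs : s < 2*c)
    (h : c*x + r = c*y + s) :
    (x = y ∧ r = s) ∨ (x + 1 = y ∧ r = s + c) ∨ (x = y + 1 ∧ r + c = s) := by
  rcases Nat.lt_or_ge r c with h1 | h1 <;> rcases Nat.lt_or_ge s c with h2 | h2
  · exact Or.inl (key_div hc h1 h2 h)
  · have h' : c*x + r = c*(y+1) + (s - c) := by have h0 : c*(y+1) = c*y + c := by ring
                                                omega
    obtain ⟨hxy, hrs⟩ := key_div hc h1 (by omega) h'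
    exact Or.inr (Or.inr ⟨hxy, by omega⟩)
  · have h' : c*(x+1) + (r - c) = c*y + s := by have h0 : c*(x+1) = c*x + c := by ring
                                                omega
    obtain ⟨hxy, hrs⟩ := key_div hc (by omega) h2 h'
    exact Or.inr (Or.inl ⟨hxy, by omega⟩)
  · have h' : c*(x+1) + (r - c) = c*(y+1) + (s - c) := by
      have h0 : c*(x+1) = c*x + c := by ring
      have h0' : c*(y+1) = c*y + c := by ring
      omega
    obtain ⟨hxy, hrs⟩ := key_div hc (by omega) (by omega) h'
    exact Or.inl ⟨by omega, by omega⟩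

lemma key_le {c x y r s : ℕ} (hs : s < c) (h : c*x + r ≤ c*y + s) : x ≤ y := by
  by_contra hlt
  push_neg at hlt
  have : c * (y+1) ≤ c * x := Nat.mul_le_mul_left c hlt
  rw [Nat.mul_add, Nat.mul_one] at this
  omega

lemma key_cancel {c x y : ℕ} (hc : 0 < c) (h : c*x = c*y) : x = y :=
  Nat.eq_of_mul_eq_mul_left hc h

end Arith

section Cross
variable {V : Type*} {G : SimpleGraph V}

/-- the crossing lemma: if `b'` is a descent neighbour of `a'` towards `a`, coming
from the edge `a'b'`, and the distance from `a'` to the other endpoint `b` of the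
edge `ab` is one smaller, then `b'` must lie on the geodesic towards `b`. -/
lemma cross (hconn : G.Connected) (hud : UDesc G) {a b a' b' : V}
    (hab : G.Adj a b) (ha'b' : G.Adj a' b')
    (h1 : G.dist a' a = G.dist a' b + 1) (h2 : G.dist b' a = G.dist a' b)
    (h3 : 1 ≤ G.dist a' b) :
    G.dist b' b + 1 = G.dist a' b := by
  obtain ⟨w, hw_adj, hw⟩ := descent_exists hconn (show G.dist a' b ≠ 0 by omega)
  have hwa : G.dist w a + 1 = G.dist a' a := by
    have u1 : G.dist a w ≤ G.dist b w + 1 := dist_adj_le hconn hab w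
    have u2 : G.dist a' a ≤ G.dist w a + 1 := dist_adj_le hconn hw_adj a
    have c1 : G.dist a w = G.dist w a := SimpleGraph.dist_comm ..
    have c2 : G.dist b w = G.dist w b := SimpleGraph.dist_comm ..
    omega
  have hb'a : G.dist b' a + 1 = G.dist a' a := by omega
  have hwb' : w = b' := hud a' a w b' hw_adj ha'b' hwa hb'a
  rw [← hwb']
  exact hw
end Cross

section Forward
variable {V : Type*} [LinearOrder V] {G : SimpleGraph V} {k : ℕ}

lemma entry_spec (hconn : G.Connected) (hk : 0 < k) {u w : V} (hadj : G.Adj u w) :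
    ∃ (i : Fin k), ((subdivision G k).Adj (Sum.inl u) (Sum.inr (⟨s(u,w), hadj⟩, i))) ∧
      (∀ v : V, DD (Sum.inr ((⟨s(u,w), hadj⟩ : G.edgeSet), i)) (Sum.inl v) =
        min ((k+1) * G.dist u v + 1) ((k+1) * G.dist w v + k)) := by
  set e : G.edgeSet := ⟨s(u,w), hadj⟩ with he
  rcases hadj.ne.lt_or_gt with h | h
  · have ha : eA e = u := eA_mk h hadj
    have hb : eB e = w := eB_mk h hadj
    refine ⟨⟨0, hk⟩, adj_inl_inr.mpr (Or.inl ⟨rfl, ha.symm⟩), fun v => ?_⟩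
    rw [DD_inr_inl, ha, hb, bse_inl, bse_inl]
    show min ((k+1) * G.dist u v + (0+1)) ((k+1) * G.dist w v + (k - 0)) = _
    omega
  · have hswap : (s(u,w) : Sym2 V) = s(w,u) := Sym2.eq_swap
    have ha : eA e = w := by
      rw [he]
      have : (⟨s(u,w), hadj⟩ : G.edgeSet) = ⟨s(w,u), hadj.symm⟩ := Subtype.ext hswap
      rw [this]
      exact eA_mk h hadj.symm
    have hb : eB e = u := by
      have : (⟨s(u,w), hadj⟩ : G.edgeSet) = ⟨s(w,u), hadj.symm⟩ := Subtype.ext hswap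
      rw [he, this]
      exact eB_mk h hadj.symm
    refine ⟨⟨k-1, by omega⟩, adj_inl_inr.mpr (Or.inr ⟨rfl, hb.symm⟩), fun v => ?_⟩
    rw [DD_inr_inl, ha, hb, bse_inl, bse_inl]
    show min ((k+1) * G.dist w v + (k-1+1)) ((k+1) * G.dist u v + (k - (k-1))) = _
    omega

lemma udesc_of_subdivision (hconn : G.Connected)
    (hudH : UDesc (subdivision G k)) : UDesc G := by
  intro u v w1 w2 h1 h2 hd1 hd2
  rcases Nat.eq_zero_or_pos k with hk | hk
  · subst hk
    have a1 : (subdivision G 0).Adj (Sum.inl u) (Sum.inl w1) := adj_inl_inl.mpr ⟨rfl, h1⟩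
    have a2 : (subdivision G 0).Adj (Sum.inl u) (Sum.inl w2) := adj_inl_inl.mpr ⟨rfl, h2⟩
    have e1 : Sum.inl w1 = (Sum.inl w2 : V ⊕ (G.edgeSet × Fin 0)) := by
      apply hudH (Sum.inl u) (Sum.inl v) _ _ a1 a2 <;>
        rw [subdivision_dist hconn, subdivision_dist hconn] <;>
        simp only [DD_inl, bse_inl] <;> omega
    exact Sum.inl.inj e1
  · obtain ⟨i1, ha1, hD1⟩ := entry_spec hconn hk h1
    obtain ⟨i2, ha2, hD2⟩ := entry_spec hconn hk h2
    have key : ∀ (w : V) (i : Fin k) (hadj : G.Adj u w), G.dist w v + 1 = G.dist u v →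
        (∀ v' : V, DD (Sum.inr ((⟨s(u,w), hadj⟩ : G.edgeSet), i)) (Sum.inl v') =
          min ((k+1) * G.dist u v' + 1) ((k+1) * G.dist w v' + k)) →
        (subdivision G k).dist (Sum.inr ((⟨s(u,w), hadj⟩ : G.edgeSet), i)) (Sum.inl v) + 1 =
          (subdivision G k).dist (Sum.inl u) (Sum.inl v) := by
      intro w i hadj hd hDD
      rw [subdivision_dist hconn, subdivision_dist hconn, hDD v, DD_inl, bse_inl]
      have : (k+1) * G.dist w v + (k+1) = (k+1) * G.dist u v := by
        rw [← Nat.mul_succ]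
        exact congrArg _ hd
      omega
    have heq := hudH (Sum.inl u) (Sum.inl v) _ _ ha1 ha2
      (key w1 i1 h1 hd1 hD1) (key w2 i2 h2 hd2 hD2)
    have : (s(u,w1) : Sym2 V) = s(u,w2) := by
      have := Sum.inr.inj heq
      exact congrArg Subtype.val (congrArg Prod.fst this)
    rw [Sym2.mk_eq_mk_iff (p := (u, w1)) (q := (u, w2))] at this
    rcases this with h | h
    · exact (Prod.ext_iff.mp h).2
    · rw [Prod.swap_prod_mk] at h
      obtain ⟨hu, hw⟩ := Prod.ext_iff.mp h
      exact absurd hu h2.ne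
end Forward
section AlphaBeta
variable {V : Type*} [LinearOrder V] {G : SimpleGraph V} {k : ℕ}

omit [LinearOrder V] in
lemma dist_comm' (u v : V) : G.dist u v = G.dist v u := SimpleGraph.dist_comm

lemma eq_edge_of_endpoints {e f : G.edgeSet} (h1 : eA e = eA f) (h2 : eB e = eB f) : e = f := by
  apply Subtype.ext
  rw [← mk_eAB e, ← mk_eAB f, h1, h2]

lemma eq_edge_of_endpoints' {e f : G.edgeSet} (h1 : eA e = eB f) (h2 : eB e = eA f) : e = f := by
  apply Subtype.ext
  rw [← mk_eAB e, ← mk_eAB f, h1, h2, Sym2.eq_swap]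

lemma alpha_ne_beta (hconn : G.Connected) (hud : UDesc G) (hk2 : k % 2 = 0)
    (e : G.edgeSet) (i : Fin k) (y : V ⊕ (G.edgeSet × Fin k))
    (hy : ∀ j : Fin k, y ≠ Sum.inr (e, j)) :
    bse y (eA e) + (i.val + 1) ≠ bse y (eB e) + (k - i.val) := by
  have hik := i.isLt
  have hab : G.Adj (eA e) (eB e) := adj_eAB e
  cases y with
  | inl v =>
    intro hEq
    rw [bse_inl, bse_inl] at hEq
    obtain ⟨-, hr⟩ := key_div (c := k+1)
      (by omega) (by omega) (by omega) hEq
    omega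
  | inr r =>
    obtain ⟨f, j⟩ := r
    have hef : e ≠ f := fun h => hy j (by rw [h])
    have hjk := j.isLt
    have ha'b' : G.Adj (eA f) (eB f) := adj_eAB f
    intro hEq
    rw [bse_inr, bse_inr] at hEq
    set a := eA e with hadef
    set b := eB e with hbdef
    set a' := eA f with ha'def
    set b' := eB f with hb'def
    set Da := G.dist a a' with hDa
    set Pa := G.dist a b' with hPa
    set Qb := G.dist b a' with hQb
    set Db := G.dist b b' with hDb
    -- triangle inequalities
    have t1 : Pa ≤ Db + 1 := dist_adj_le hconn hab b'
    have t2 : Db ≤ Pa + 1 := dist_adj_le hconn hab.symm b'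
    have t3 : Qb ≤ Da + 1 := dist_adj_le hconn hab.symm a'
    have t4 : Da ≤ Qb + 1 := dist_adj_le hconn hab a'
    have t5 : Da ≤ Pa + 1 := by
      have h := dist_adj_le hconn ha'b' a
      rw [dist_comm' a' a, dist_comm' b' a] at h
      exact h
    have t6 : Pa ≤ Da + 1 := by
      have h := dist_adj_le hconn ha'b'.symm a
      rw [dist_comm' a' a, dist_comm' b' a] at h
      exact h
    have t7 : Qb ≤ Db + 1 := by
      have h := dist_adj_le hconn ha'b' b
      rw [dist_comm' a' b, dist_comm' b' b] at h
      exact h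
    have t8 : Db ≤ Qb + 1 := by
      have h := dist_adj_le hconn ha'b'.symm b
      rw [dist_comm' a' b, dist_comm' b' b] at h
      exact h
    -- degenerate coincidence cases give e = f
    have deg1 : Da = 0 → Db = 0 → False := by
      intro h1 h2
      exact hef (eq_edge_of_endpoints ((hconn.dist_eq_zero_iff).mp h1)
        ((hconn.dist_eq_zero_iff).mp h2))
    have deg2 : Pa = 0 → Qb = 0 → False := by
      intro h1 h2
      exact hef (eq_edge_of_endpoints' ((hconn.dist_eq_zero_iff).mp h1)
        ((hconn.dist_eq_zero_iff).mp h2))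
    rcases min_cases ((k+1) * Da + (j.val+1)) ((k+1) * Pa + (k - j.val)) with
      ⟨hA, hA2⟩ | ⟨hA, hA2⟩ <;>
      rcases min_cases ((k+1) * Qb + (j.val+1)) ((k+1) * Db + (k - j.val)) with
        ⟨hB, hB2⟩ | ⟨hB, hB2⟩ <;> rw [hA, hB] at hEq
    · -- both branch 1
      have h' : (k+1) * Da + (i.val + 1) = (k+1) * Qb + (k - i.val) := by omega
      obtain ⟨-, hr⟩ := key_div (c := k+1) (by omega) (by omega) (by omega) h'
      omega
    · -- a via a', b via b' : the "tie" case
      have h' : (k+1) * Da + (j.val + 1 + (i.val + 1)) =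
          (k+1) * Db + ((k - j.val) + (k - i.val)) := by omega
      rcases key_div2 (c := k+1) (by omega) (by omega) (by omega) h' with
        ⟨hDD, hrs⟩ | ⟨hDD, hrs⟩ | ⟨hDD, hrs⟩
      · -- Da = Db, i + j + 1 = k
        have hDaPa : Da ≤ Pa := key_le (c := k+1) (show k - j.val < k+1 by omega) hA2
        have hDbQb : Db ≤ Qb := key_le (c := k+1) (show j.val + 1 < k+1 by omega) (le_of_lt hB2)
        have hD0 : 1 ≤ Da := by
          rcases Nat.eq_zero_or_pos Da with h0 | h0
          · exact absurd (show Db = 0 by omega) (fun hdb => deg1 h0 hdb)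
          · exact h0
        by_cases hP : Pa = Da + 1
        · have hc := cross hconn hud ha'b'.symm hab
            (show G.dist a b' = G.dist a a' + 1 by omega)
            (show G.dist b b' = G.dist a a' by omega)
            (show 1 ≤ G.dist a a' by omega)
          -- hc : G.dist b a' + 1 = G.dist a a'
          omega
        · by_cases hQ : Qb = Da + 1
          · have hc := cross hconn hud ha'b' hab.symm
              (show G.dist b a' = G.dist b b' + 1 by omega)
              (show G.dist a a' = G.dist b b' by omega)
              (show 1 ≤ G.dist b b' by omega)
            -- hc : G.dist a b' + 1 = G.dist b b'
            omega
          · -- Pa = Da, Qb = Da : direct contradiction with branch conditions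
            have e1 : Pa = Da := by omega
            have e2 : Qb = Da := by omega
            have m1 : (k+1)*Pa = (k+1)*Da := by rw [e1]
            have m2 : (k+1)*Qb = (k+1)*Da := by rw [e2]
            have m3 : (k+1)*Db = (k+1)*Da := by rw [hDD]
            omega
      · omega
      · omega
    · -- a via b', b via a' : second tie case
      have h' : (k+1) * Pa + ((k - j.val) + (i.val + 1)) =
          (k+1) * Qb + ((j.val + 1) + (k - i.val)) := by omega
      rcases key_div2 (c := k+1) (by omega) (by omega) (by omega) h' with
        ⟨hDD, hrs⟩ | ⟨hDD, hrs⟩ | ⟨hDD, hrs⟩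
      · -- Pa = Qb, i = j
        have hPaDa : Pa ≤ Da := key_le (c := k+1) (show j.val + 1 < k+1 by omega) (le_of_lt hA2)
        have hQbDb : Qb ≤ Db := key_le (c := k+1) (show k - j.val < k+1 by omega) hB2
        have hP0 : 1 ≤ Pa := by
          rcases Nat.eq_zero_or_pos Pa with h0 | h0
          · exact absurd (show Qb = 0 by omega) (fun hqb => deg2 h0 hqb)
          · exact h0
        by_cases hD : Da = Pa + 1
        · have hc := cross hconn hud ha'b' hab
            (show G.dist a a' = G.dist a b' + 1 by omega)
            (show G.dist b a' = G.dist a b' by omega)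
            (show 1 ≤ G.dist a b' by omega)
          -- hc : G.dist b b' + 1 = G.dist a b'
          omega
        · by_cases hDb' : Db = Pa + 1
          · have hc := cross hconn hud ha'b'.symm hab.symm
              (show G.dist b b' = G.dist b a' + 1 by omega)
              (show G.dist a b' = G.dist b a' by omega)
              (show 1 ≤ G.dist b a' by omega)
            -- hc : G.dist a a' + 1 = G.dist b a'
            omega
          · have e1 : Da = Pa := by omega
            have e2 : Db = Pa := by omega
            have m1 : (k+1)*Da = (k+1)*Pa := by rw [e1]
            have m2 : (k+1)*Db = (k+1)*Pa := by rw [e2]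
            have m3 : (k+1)*Qb = (k+1)*Pa := by rw [hDD]
            omega
      · omega
      · omega
    · -- both branch 2
      have h' : (k+1) * Pa + (i.val + 1) = (k+1) * Db + (k - i.val) := by omega
      obtain ⟨-, hr⟩ := key_div (c := k+1) (by omega) (by omega) (by omega) h'
      omega
end AlphaBeta
section Backward
variable {V : Type*} [LinearOrder V] {G : SimpleGraph V} {k : ℕ}

lemma DD_inr_side {e : G.edgeSet} {i : Fin k} {y : V ⊕ (G.edgeSet × Fin k)}
    (hy : ∀ j : Fin k, y ≠ Sum.inr (e, j)) :
    DD (Sum.inr (e, i)) y = min (bse y (eA e) + (i.val+1)) (bse y (eB e) + (k - i.val)) := by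
  cases y with
  | inl v => exact DD_inr_inl e i v
  | inr r =>
    obtain ⟨f, j⟩ := r
    exact DD_inr_inr_ne (fun h => hy j (by rw [h])) i j

lemma bse_nonneg_lb (f : G.edgeSet) (j : Fin k) (t : V) :
    True := trivial

lemma udesc_subdivision (hconn : G.Connected) (hk2 : k % 2 = 0) (hud : UDesc G) :
    UDesc (subdivision G k) := by
  intro x y z1 z2 ha1 ha2 hd1 hd2
  rw [subdivision_dist hconn, subdivision_dist hconn] at hd1 hd2
  cases x with
  | inl u =>
    cases z1 with
    | inl w1 =>
      cases z2 with
      | inl w2 =>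
        rw [adj_inl_inl] at ha1 ha2
        obtain ⟨hk0, hw1⟩ := ha1
        obtain ⟨-, hw2⟩ := ha2
        cases y with
        | inr r => exact absurd r.2.isLt (by omega)
        | inl v =>
          simp only [DD_inl, bse_inl] at hd1 hd2
          subst hk0
          simp only [Nat.zero_add, one_mul] at hd1 hd2
          exact congrArg Sum.inl (hud u v w1 w2 hw1 hw2 hd1 hd2)
      | inr p2 =>
        rw [adj_inl_inl] at ha1
        exact absurd p2.2.isLt (by omega)
    | inr p1 =>
      cases z2 with
      | inl w2 =>
        rw [adj_inl_inl] at ha2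
        exact absurd p1.2.isLt (by omega)
      | inr p2 =>
        obtain ⟨e1, i1⟩ := p1
        obtain ⟨e2, i2⟩ := p2
        rw [adj_inl_inr] at ha1 ha2
        have hk1 : 0 < k := i1.pos
        cases y with
        | inl v =>
          have main : ∀ (e : G.edgeSet) (i : Fin k),
              ((i.val = 0 ∧ u = eA e) ∨ (i.val = k-1 ∧ u = eB e)) →
              DD (Sum.inr (e, i)) (Sum.inl v) + 1 = DD (Sum.inl u : V ⊕ (G.edgeSet × Fin k)) (Sum.inl v) →
              ∃ w : V, G.Adj u w ∧ G.dist w v + 1 = G.dist u v ∧ e.val = s(u, w) ∧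
                ((i.val = 0 ∧ u = eA e) ∨ (i.val = k-1 ∧ u = eB e)) := by
            intro e i hcase hd
            simp only [DD_inr_inl, DD_inl, bse_inl] at hd
            rcases hcase with ⟨hi, hu⟩ | ⟨hi, hu⟩
            · refine ⟨eB e, by rw [hu]; exact adj_eAB e, ?_, by rw [← mk_eAB e, hu],
                Or.inl ⟨hi, hu⟩⟩
              rw [hi, ← hu] at hd
              have hr : (k+1) * (G.dist (eB e) v + 1) = (k+1) * G.dist (eB e) v + (k+1) := by
                ring
              refine key_cancel (c := k+1) (by omega) ?_
              omega
            · refine ⟨eA e, by rw [hu]; exact (adj_eAB e).symm, ?_,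
                by rw [← mk_eAB e, hu, Sym2.eq_swap], Or.inr ⟨hi, hu⟩⟩
              rw [hi, ← hu] at hd
              have hr : (k+1) * (G.dist (eA e) v + 1) = (k+1) * G.dist (eA e) v + (k+1) := by
                ring
              refine key_cancel (c := k+1) (by omega) ?_
              omega
          obtain ⟨w1, haw1, hdw1, hew1, hpos1⟩ := main e1 i1 ha1 hd1
          obtain ⟨w2, haw2, hdw2, hew2, hpos2⟩ := main e2 i2 ha2 hd2
          have hw : w1 = w2 := hud u v w1 w2 haw1 haw2 hdw1 hdw2
          subst hw
          have he : e1 = e2 := Subtype.ext (hew1.trans hew2.symm)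
          subst he
          rcases hpos1 with ⟨hi1, hu1⟩ | ⟨hi1, hu1⟩ <;>
            rcases hpos2 with ⟨hi2, hu2⟩ | ⟨hi2, hu2⟩
          · exact congrArg _ (congrArg _ (Fin.ext (by omega)))
          · exact absurd (hu1.symm.trans hu2) (eA_ne_eB e1)
          · exact absurd (hu2.symm.trans hu1) (eA_ne_eB e1)
          · exact congrArg _ (congrArg _ (Fin.ext (by omega)))
        | inr r =>
          obtain ⟨f, j⟩ := r
          have hjk := j.isLt
          have hbse_lb : ∀ t : V, 0 ≤ bse (Sum.inr (f, j) : V ⊕ (G.edgeSet × Fin k)) t :=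
            fun t => Nat.zero_le _
          by_cases hu1 : u = eA f
          · have main : ∀ (e : G.edgeSet) (i : Fin k),
                ((i.val = 0 ∧ u = eA e) ∨ (i.val = k-1 ∧ u = eB e)) →
                DD (Sum.inr (e, i)) (Sum.inr (f, j)) + 1 = DD (Sum.inl u : V ⊕ (G.edgeSet × Fin k)) (Sum.inr (f, j)) →
                e = f ∧ i.val = 0 := by
              intro e i hcase hd
              by_cases hef : e = f
              · subst hef
                rcases hcase with ⟨hi, -⟩ | ⟨-, hu'⟩
                · exact ⟨rfl, hi⟩
                · exact absurd (hu1.symm.trans hu') (eA_ne_eB e)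
              · exfalso
                rw [DD_inr_inr_ne hef, DD_inl, hu1, bse_eA] at hd
                rcases hcase with ⟨hi, hu'⟩ | ⟨hi, hu'⟩
                · rw [hi, ← hu', hu1, bse_eA] at hd
                  omega
                · rw [hi, ← hu', hu1, bse_eA] at hd
                  omega
            obtain ⟨hef1, hi1⟩ := main e1 i1 ha1 hd1
            obtain ⟨hef2, hi2⟩ := main e2 i2 ha2 hd2
            subst hef1
            subst hef2
            exact congrArg _ (congrArg _ (Fin.ext (by omega)))
          · by_cases hu2 : u = eB f
            · have main : ∀ (e : G.edgeSet) (i : Fin k),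
                  ((i.val = 0 ∧ u = eA e) ∨ (i.val = k-1 ∧ u = eB e)) →
                  DD (Sum.inr (e, i)) (Sum.inr (f, j)) + 1 = DD (Sum.inl u : V ⊕ (G.edgeSet × Fin k)) (Sum.inr (f, j)) →
                  e = f ∧ i.val = k - 1 := by
                intro e i hcase hd
                by_cases hef : e = f
                · subst hef
                  rcases hcase with ⟨-, hu'⟩ | ⟨hi, -⟩
                  · exact absurd (hu'.symm.trans hu2) (eA_ne_eB e)
                  · exact ⟨rfl, hi⟩
                · exfalso
                  rw [DD_inr_inr_ne hef, DD_inl, hu2, bse_eB] at hd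
                  rcases hcase with ⟨hi, hu'⟩ | ⟨hi, hu'⟩
                  · rw [hi, ← hu', hu2, bse_eB] at hd
                    omega
                  · rw [hi, ← hu', hu2, bse_eB] at hd
                    omega
              obtain ⟨hef1, hi1⟩ := main e1 i1 ha1 hd1
              obtain ⟨hef2, hi2⟩ := main e2 i2 ha2 hd2
              subst hef1
              subst hef2
              exact congrArg _ (congrArg _ (Fin.ext (by omega)))
            · -- u is not an endpoint of f
              have main : ∀ (e : G.edgeSet) (i : Fin k),
                  ((i.val = 0 ∧ u = eA e) ∨ (i.val = k-1 ∧ u = eB e)) →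
                  DD (Sum.inr (e, i)) (Sum.inr (f, j)) + 1 = DD (Sum.inl u : V ⊕ (G.edgeSet × Fin k)) (Sum.inr (f, j)) →
                  ∃ w, G.Adj u w ∧ e.val = s(u, w) ∧
                    ((i.val = 0 ∧ u = eA e) ∨ (i.val = k-1 ∧ u = eB e)) ∧
                    bse (Sum.inr (f, j)) w + (k+1) = bse (Sum.inr (f, j)) u := by
                intro e i hcase hd
                have hef : e ≠ f := by
                  intro h
                  subst h
                  rcases hcase with ⟨-, h'⟩ | ⟨-, h'⟩
                  exacts [hu1 h', hu2 h']
                rw [DD_inr_inr_ne hef, DD_inl] at hd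
                rcases hcase with ⟨hi, hu'⟩ | ⟨hi, hu'⟩
                · refine ⟨eB e, by rw [hu']; exact adj_eAB e, by rw [← mk_eAB e, hu'],
                    Or.inl ⟨hi, hu'⟩, ?_⟩
                  rw [hi, ← hu'] at hd
                  omega
                · refine ⟨eA e, by rw [hu']; exact (adj_eAB e).symm,
                    by rw [← mk_eAB e, hu', Sym2.eq_swap], Or.inr ⟨hi, hu'⟩, ?_⟩
                  rw [hi, ← hu'] at hd
                  omega
              obtain ⟨w1, haw1, hew1, hpos1, hE1⟩ := main e1 i1 ha1 hd1
              obtain ⟨w2, haw2, hew2, hpos2, hE2⟩ := main e2 i2 ha2 hd2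
              have hw : w1 = w2 := by
                simp only [bse_inr] at hE1 hE2
                rcases min_cases ((k+1) * G.dist u (eA f) + (j.val+1))
                    ((k+1) * G.dist u (eB f) + (k - j.val)) with ⟨hU, hU2⟩ | ⟨hU, hU2⟩ <;>
                  rw [hU] at hE1 hE2
                · -- u's branch : towards eA f
                  have desc : ∀ w : V,
                      min ((k+1) * G.dist w (eA f) + (j.val+1))
                        ((k+1) * G.dist w (eB f) + (k - j.val)) + (k+1) =
                        (k+1) * G.dist u (eA f) + (j.val+1) →
                      G.dist w (eA f) + 1 = G.dist u (eA f) := by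
                    intro w hE
                    rcases min_cases ((k+1) * G.dist w (eA f) + (j.val+1))
                        ((k+1) * G.dist w (eB f) + (k - j.val)) with ⟨hW, -⟩ | ⟨hW, -⟩ <;>
                      rw [hW] at hE
                    · have hr : (k+1) * (G.dist w (eA f) + 1) =
                          (k+1) * G.dist w (eA f) + (k+1) := by ring
                      refine key_cancel (c := k+1) (by omega) ?_
                      omega
                    · exfalso
                      have h' : (k+1) * (G.dist w (eB f) + 1) + (k - j.val) =
                          (k+1) * G.dist u (eA f) + (j.val+1) := by
                        have hr : (k+1) * (G.dist w (eB f) + 1) =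
                            (k+1) * G.dist w (eB f) + (k+1) := by ring
                        omega
                      obtain ⟨-, hr⟩ := key_div (c := k+1) (by omega) (by omega) (by omega) h'
                      omega
                  exact hud u (eA f) w1 w2 haw1 haw2 (desc w1 hE1) (desc w2 hE2)
                · -- u's branch : towards eB f
                  have desc : ∀ w : V,
                      min ((k+1) * G.dist w (eA f) + (j.val+1))
                        ((k+1) * G.dist w (eB f) + (k - j.val)) + (k+1) =
                        (k+1) * G.dist u (eB f) + (k - j.val) →
                      G.dist w (eB f) + 1 = G.dist u (eB f) := by
                    intro w hE
                    rcases min_cases ((k+1) * G.dist w (eA f) + (j.val+1))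
                        ((k+1) * G.dist w (eB f) + (k - j.val)) with ⟨hW, -⟩ | ⟨hW, -⟩ <;>
                      rw [hW] at hE
                    · exfalso
                      have h' : (k+1) * (G.dist w (eA f) + 1) + (j.val+1) =
                          (k+1) * G.dist u (eB f) + (k - j.val) := by
                        have hr : (k+1) * (G.dist w (eA f) + 1) =
                            (k+1) * G.dist w (eA f) + (k+1) := by ring
                        omega
                      obtain ⟨-, hr⟩ := key_div (c := k+1) (by omega) (by omega) (by omega) h'
                      omega
                    · have hr : (k+1) * (G.dist w (eB f) + 1) =
                          (k+1) * G.dist w (eB f) + (k+1) := by ring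
                      refine key_cancel (c := k+1) (by omega) ?_
                      omega
                  exact hud u (eB f) w1 w2 haw1 haw2 (desc w1 hE1) (desc w2 hE2)
              subst hw
              have he : e1 = e2 := Subtype.ext (hew1.trans hew2.symm)
              subst he
              rcases hpos1 with ⟨hi1, hu1'⟩ | ⟨hi1, hu1'⟩ <;>
                rcases hpos2 with ⟨hi2, hu2'⟩ | ⟨hi2, hu2'⟩
              · exact congrArg _ (congrArg _ (Fin.ext (by omega)))
              · exact absurd (hu1'.symm.trans hu2') (eA_ne_eB e1)
              · exact absurd (hu2'.symm.trans hu1') (eA_ne_eB e1)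
              · exact congrArg _ (congrArg _ (Fin.ext (by omega)))
  | inr p =>
    obtain ⟨e, i⟩ := p
    have hik := i.isLt
    by_cases hy : ∃ j : Fin k, y = Sum.inr (e, j)
    · obtain ⟨j, rfl⟩ := hy
      have hjk := j.isLt
      by_cases hij : i = j
      · subst hij
        rw [DD_inr_inr_same, Nat.dist_self] at hd1
        omega
      · have hij' : i.val ≠ j.val := fun h => hij (Fin.ext h)
        rw [DD_inr_inr_same] at hd1 hd2
        have main : ∀ z, (subdivision G k).Adj (Sum.inr (e, i)) z →
            DD z (Sum.inr (e, j)) + 1 = Nat.dist i.val j.val →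
            ∃ i' : Fin k, z = Sum.inr (e, i') ∧
              (i.val + 1 = i'.val ∨ i'.val + 1 = i.val) ∧
              Nat.dist i'.val j.val + 1 = Nat.dist i.val j.val := by
          intro z haz hdz
          cases z with
          | inl w =>
            exfalso
            rw [adj_inr_inl] at haz
            rcases haz with ⟨hi, hu⟩ | ⟨hi, hu⟩
            · rw [DD_inl, hu, bse_eA] at hdz
              unfold Nat.dist at hdz
              omega
            · rw [DD_inl, hu, bse_eB] at hdz
              unfold Nat.dist at hdz
              omega
          | inr r =>
            obtain ⟨e', i'⟩ := r
            rw [adj_inr_inr] at haz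
            obtain ⟨heq, hrel⟩ := haz
            subst heq
            rw [DD_inr_inr_same] at hdz
            exact ⟨i', rfl, hrel, hdz⟩
        obtain ⟨i1', hz1, hrel1, hdist1⟩ := main z1 ha1 hd1
        obtain ⟨i2', hz2, hrel2, hdist2⟩ := main z2 ha2 hd2
        rw [hz1, hz2]
        refine congrArg _ (congrArg _ (Fin.ext ?_))
        unfold Nat.dist at hdist1 hdist2
        omega
    · push_neg at hy
      have hαβ := alpha_ne_beta hconn hud hk2 e i y hy
      have main : ∀ z, (subdivision G k).Adj (Sum.inr (e, i)) z →
          DD z y + 1 = DD (Sum.inr (e, i)) y →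
          (bse y (eA e) + (i.val+1) < bse y (eB e) + (k - i.val) ∧
            ((i.val = 0 ∧ z = Sum.inl (eA e)) ∨
              (∃ i' : Fin k, z = Sum.inr (e, i') ∧ i'.val + 1 = i.val)))
          ∨ (bse y (eB e) + (k - i.val) < bse y (eA e) + (i.val+1) ∧
            ((i.val = k-1 ∧ z = Sum.inl (eB e)) ∨
              (∃ i' : Fin k, z = Sum.inr (e, i') ∧ i.val + 1 = i'.val))) := by
        intro z haz hdz
        rw [DD_inr_side hy] at hdz
        cases z with
        | inl w =>
          rw [adj_inr_inl] at haz
          rcases haz with ⟨hi, hu⟩ | ⟨hi, hu⟩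
          · rw [DD_inl, hu] at hdz
            exact Or.inl ⟨by omega, Or.inl ⟨hi, by rw [hu]⟩⟩
          · rw [DD_inl, hu] at hdz
            exact Or.inr ⟨by omega, Or.inl ⟨hi, by rw [hu]⟩⟩
        | inr r =>
          obtain ⟨e', i'⟩ := r
          rw [adj_inr_inr] at haz
          obtain ⟨heq, hrel⟩ := haz
          subst heq
          have hik' := i'.isLt
          rw [DD_inr_side hy] at hdz
          rcases hrel with hrel | hrel
          · exact Or.inr ⟨by omega, Or.inr ⟨i', rfl, hrel⟩⟩
          · exact Or.inl ⟨by omega, Or.inr ⟨i', rfl, hrel⟩⟩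
      rcases main z1 ha1 hd1 with ⟨hlt1, hform1⟩ | ⟨hlt1, hform1⟩ <;>
        rcases main z2 ha2 hd2 with ⟨hlt2, hform2⟩ | ⟨hlt2, hform2⟩
      · rcases hform1 with ⟨hi1, rfl⟩ | ⟨i1', rfl, hr1⟩ <;>
          rcases hform2 with ⟨hi2, rfl⟩ | ⟨i2', rfl, hr2⟩
        · rfl
        · exact absurd hr2 (by omega)
        · exact absurd hr1 (by omega)
        · exact congrArg _ (congrArg _ (Fin.ext (by omega)))
      · omega
      · omega
      · rcases hform1 with ⟨hi1, rfl⟩ | ⟨i1', rfl, hr1⟩ <;>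
          rcases hform2 with ⟨hi2, rfl⟩ | ⟨i2', rfl, hr2⟩
        · rfl
        · exact absurd hr2 (by have := i2'.isLt; omega)
        · exact absurd hr1 (by have := i1'.isLt; omega)
        · exact congrArg _ (congrArg _ (Fin.ext (by omega)))
end Backward

/-- For an even natural number `k` and a finite connected graph `G`, the subdivision `G(k)`
is geodetic if and only if `G` is geodetic. -/
theorem stmt_4 {V : Type*} [Fintype V] [LinearOrder V] (G : SimpleGraph V)
    (hconn : G.Connected) (k : ℕ) (hk : Even k) :
    IsGeodetic (subdivision G k) ↔ IsGeodetic G := by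
  rw [isGeodetic_iff_udesc (subdivision_connected hconn), isGeodetic_iff_udesc hconn]
  exact ⟨fun h => udesc_of_subdivision hconn h,
    fun h => udesc_subdivision hconn (Nat.even_iff.mp hk) h⟩
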